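/- arXiv:2505.04549 — 4 statements merged into one kernel-verified Lean document; each statement's English description precedes it below -/
import Mathlib

section
/- Let A = (Q, E, s, F) be a Wheeler GNFA, let ≤ be a Wheeler order on A, and let α ∈ Σ*. Then G_⊣(α) is ≤-convex: for all u, v, z ∈ Q with u < v < z, if u ∈ G_⊣(α) and z ∈ G_⊣(α), then v ∈ G_⊣(α). -/
/-- Strict co-lexicographic order: `α ≺ β` iff `α.reverse` is lexicographically
smaller than `β.reverse`. The empty string is the minimum. -/
def ColexLt {σ : Type*} [LinearOrder σ] (α β : List σ) : Prop :=
  List.Lex (· < ·) α.reverse β.reverse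

/-- Non-strict co-lexicographic order `α ≼ β`. -/
def ColexLe {σ : Type*} [LinearOrder σ] (α β : List σ) : Prop :=
  ColexLt α β ∨ α = β

/-- `α` is a strict suffix of `β`. -/
def IsStrictSuffix {σ : Type*} (α β : List σ) : Prop :=
  α <:+ β ∧ α ≠ β

/-- `p(α, k)`: the prefix of `α` of length `k`. -/
def pref {σ : Type*} (α : List σ) (k : ℕ) : List σ := α.take k

/-- `s(α, k)`: the suffix of `α` of length `k`. -/
def suff {σ : Type*} (α : List σ) (k : ℕ) : List σ := α.drop (α.length - k)

/-- The 1-based rank of a state in a finite linear order: `rankQ u = i` means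
`u = Q[i]` in the enumeration `Q[1] < Q[2] < ⋯ < Q[|Q|]`. -/
noncomputable def rankQ {Q : Type*} [Fintype Q] [LinearOrder Q] (u : Q) : ℕ :=
  {v : Q | v ≤ u}.ncard

/-- `Q[i, j] = {Q[i], …, Q[j]}` (empty if `i > j`). -/
def Qiv (Q : Type*) [Fintype Q] [LinearOrder Q] (i j : ℕ) : Set Q :=
  {u | i ≤ rankQ u ∧ rankQ u ≤ j}

/-- A generalized nondeterministic finite automaton: a finite set of
string-labeled edges `E ⊆ Q × Q × Σ*`, an initial state `s`, final states `F`. -/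
structure GNFA (σ Q : Type*) where
  E : Finset (Q × Q × List σ)
  s : Q
  F : Finset Q

namespace GNFA

variable {σ Q : Type*}

/-- `I A u β` means `β ∈ I_u`: `β` is obtained by concatenating the edge labels
along some path from `s` to `u` (in particular `ε ∈ I_s`). -/
inductive I (A : GNFA σ Q) : Q → List σ → Prop
  | base : I A A.s []
  | step {u v : Q} {α ρ : List σ} : I A u α → (u, v, ρ) ∈ A.E → I A v (α ++ ρ)

/-- Reachability along edges. -/
def Reach (A : GNFA σ Q) : Q → Q → Prop :=
  Relation.ReflTransGen (fun x y => ∃ ρ, (x, y, ρ) ∈ A.E)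

/-- Every state is reachable from the initial state and is co-reachable
(final or allows reaching a final state). -/
def Standard (A : GNFA σ Q) : Prop :=
  (∀ u, A.Reach A.s u) ∧ ∀ u, ∃ f ∈ A.F, A.Reach u f

/-- An ε-walk from `u` to `v`: a (possibly empty) sequence of ε-labeled edges. -/
def EpsWalk (A : GNFA σ Q) : Q → Q → Prop :=
  Relation.ReflTransGen (fun x y => (x, y, ([] : List σ)) ∈ A.E)

/-- An `r`-GNFA: all edge labels have length at most `r`. -/
def Bounded (A : GNFA σ Q) (r : ℕ) : Prop := ∀ e ∈ A.E, e.2.2.length ≤ r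

/-- A GNFA without ε-transitions: every edge label is nonempty. -/
def NoEps (A : GNFA σ Q) : Prop := ∀ e ∈ A.E, e.2.2 ≠ []

/-- `λ(u)`: the set of strings labeling some edge entering `u`. -/
def lab (A : GNFA σ Q) (u : Q) : Set (List σ) := {ρ | ∃ u', (u', u, ρ) ∈ A.E}

/-- `G_⊣(α)`: states `u` such that some `β ∈ I_u` has `α` as a suffix. -/
def Gsuf (A : GNFA σ Q) (α : List σ) : Set Q := {u | ∃ β, I A u β ∧ α <:+ β}

/-- `G*(α)`: states reached by an edge whose label has `α` as a suffix. -/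
def Gstar (A : GNFA σ Q) (α : List σ) : Set Q := {u | ∃ ρ ∈ A.lab u, α <:+ ρ}

section Colex
variable [LinearOrder σ]

/-- The preorder `u ≼_A v`. -/
def Preceq (A : GNFA σ Q) (u v : Q) : Prop :=
  ∀ α β, I A u α → I A v β →
    ¬((I A u α ∧ I A v α) ∧ (I A u β ∧ I A v β)) → ColexLt α β

/-- `G^≺(α)`: states `u` such that every `β ∈ I_u` satisfies `β ≺ α`. -/
def Gprec (A : GNFA σ Q) (α : List σ) : Set Q := {u | ∀ β, I A u β → ColexLt β α}

/-- `G^≺_⊣(α) = G^≺(α) ∪ G_⊣(α)`. -/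
def GprecSuf (A : GNFA σ Q) (α : List σ) : Set Q := A.Gprec α ∪ A.Gsuf α

/-- The linear order on `Q` is a Wheeler order on `A` (Axioms 1–4). -/
def IsWheeler [LinearOrder Q] (A : GNFA σ Q) : Prop :=
  (∀ u v : Q, u ≤ v → A.Preceq u v) ∧
  (∀ u : Q, A.s ≤ u) ∧
  (∀ u' u v' v : Q, ∀ ρ ρ' : List σ, (u', u, ρ) ∈ A.E → (v', v, ρ') ∈ A.E →
      u < v → ¬IsStrictSuffix ρ' ρ → ColexLe ρ ρ') ∧
  (∀ u' u v' v : Q, ∀ ρ : List σ, (u', u, ρ) ∈ A.E → (v', v, ρ) ∈ A.E →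
      u < v → u' ≤ v')

end Colex

section Indexed
variable [Fintype Q] [LinearOrder Q]

/-- `out(Q[1, m], ρ)`: number of edges labeled `ρ` leaving states in `Q[1, m]`. -/
noncomputable def outC (A : GNFA σ Q) (m : ℕ) (ρ : List σ) : ℕ :=
  {e : Q × Q × List σ | e ∈ A.E ∧ rankQ e.1 ≤ m ∧ e.2.2 = ρ}.ncard

/-- `in(Q[1, m], ρ)`: number of edges labeled `ρ` entering states in `Q[1, m]`. -/
noncomputable def inC (A : GNFA σ Q) (m : ℕ) (ρ : List σ) : ℕ :=
  {e : Q × Q × List σ | e ∈ A.E ∧ rankQ e.2.1 ≤ m ∧ e.2.2 = ρ}.ncard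

/-- `A_max[i]`: the largest `j` such that there is an ε-walk from `Q[j]` to `Q[i]`. -/
noncomputable def Amax (A : GNFA σ Q) (i : ℕ) : ℕ :=
  sSup {j | ∃ u v : Q, rankQ u = i ∧ rankQ v = j ∧ A.EpsWalk v u}

/-- `A_min[i]`: the smallest `j` such that there is an ε-walk from `Q[j]` to `Q[i]`. -/
noncomputable def Amin (A : GNFA σ Q) (i : ℕ) : ℕ :=
  sInf {j | ∃ u v : Q, rankQ u = i ∧ rankQ v = j ∧ A.EpsWalk v u}

variable [LinearOrder σ]

/-- `f_k = out(Q[1, |G^≺(p(α, |α|−k))|], s(α, k))`. -/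
noncomputable def fk (A : GNFA σ Q) (α : List σ) (k : ℕ) : ℕ :=
  A.outC ((A.Gprec (pref α (α.length - k))).ncard) (suff α k)

/-- `g_k = out(Q[1, |G^≺_⊣(p(α, |α|−k))|], s(α, k))`. -/
noncomputable def gk (A : GNFA σ Q) (α : List σ) (k : ℕ) : ℕ :=
  A.outC ((A.GprecSuf (pref α (α.length - k))).ncard) (suff α k)

/-- The property defining `j*` in Lemmas 2 and 4 (largest `j` satisfying it):
(i) `in(Q[1, j], s(α, k)) ≤ f_k` for every `0 < k < min{r+1, |α|}`; and
(ii) `ρ ≺ α` for every `ρ ∈ Σ^k ∩ λ(Q[h])`, every `1 ≤ h ≤ j`, every `0 < k < r+1`. -/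
def Jcond (A : GNFA σ Q) (r : ℕ) (α : List σ) (j : ℕ) : Prop :=
  (∀ k, 0 < k → k < min (r + 1) α.length → A.inC j (suff α k) ≤ A.fk α k) ∧
  (∀ k, 0 < k → k < r + 1 → ∀ h, 1 ≤ h → h ≤ j → ∀ u : Q, rankQ u = h →
      ∀ ρ : List σ, ρ.length = k → ρ ∈ A.lab u → ColexLt ρ α)

/-- The property defining `i*` (largest `i ≤ |Q|` satisfying it):
if `i ≥ 1` then `Q[i] ∈ G*(α)`. -/
def Icond (A : GNFA σ Q) (α : List σ) (i : ℕ) : Prop :=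
  1 ≤ i → ∃ u : Q, rankQ u = i ∧ u ∈ A.Gstar α

/-- The property defining `j°` (smallest `j ≤ |Q|` satisfying it):
`in(Q[1, j], s(α, k)) ≥ g_k` for every `0 < k < min{r+1, |α|}` with `g_k > f_k`. -/
def Jcond2 (A : GNFA σ Q) (r : ℕ) (α : List σ) (j : ℕ) : Prop :=
  ∀ k, 0 < k → k < min (r + 1) α.length → A.fk α k < A.gk α k →
    A.gk α k ≤ A.inC j (suff α k)

end Indexed

end GNFA
lemma GNFA.reach_I {σ Q : Type*} (A : GNFA σ Q) {v : Q} (h : A.Reach A.s v) :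
    ∃ β, A.I v β := by
  induction h with
  | refl => exact ⟨[], GNFA.I.base⟩
  | tail _ hstep ih =>
      obtain ⟨β, hβ⟩ := ih
      obtain ⟨ρ, hρ⟩ := hstep
      exact ⟨β ++ ρ, hβ.step hρ⟩

lemma prefix_of_lex_between {σ : Type*} [LinearOrder σ] :
    ∀ (p x y z : List σ), p <+: x → p <+: z →
      List.Lex (· < ·) x y → List.Lex (· < ·) y z → p <+: y := by
  intro p
  induction p with
  | nil => intro x y z _ _ _ _; exact List.nil_prefix
  | cons c p' ih =>
    intro x y z hx hz hxy hyz
    obtain ⟨t1, rfl⟩ := hx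
    obtain ⟨t2, rfl⟩ := hz
    simp only [List.cons_append] at hxy hyz
    cases hxy with
    | rel h =>
      cases hyz with
      | rel h' => exact absurd (h.trans h') (lt_irrefl c)
      | cons h' => exact absurd h (lt_irrefl c)
    | cons h =>
      cases hyz with
      | rel h' => exact absurd h' (lt_irrefl c)
      | cons h' =>
        exact List.cons_prefix_cons.mpr
          ⟨rfl, ih _ _ _ (List.prefix_append _ _) (List.prefix_append _ _) h h'⟩

/-- Let `A` be a Wheeler GNFA with Wheeler order `≤` and
`α ∈ Σ*`. Then `G_⊣(α)` is `≤`-convex. -/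
theorem gsuf_convex {σ Q : Type*} [Fintype σ] [LinearOrder σ]
    [Fintype Q] [LinearOrder Q] (A : GNFA σ Q)
    (hA : A.Standard) (hW : A.IsWheeler) (α : List σ)
    (u v z : Q) (huv : u < v) (hvz : v < z)
    (hu : u ∈ A.Gsuf α) (hz : z ∈ A.Gsuf α) :
    v ∈ A.Gsuf α := by
  obtain ⟨βu, hIu, hsu⟩ := hu
  obtain ⟨βz, hIz, hsz⟩ := hz
  obtain ⟨β, hIv⟩ := A.reach_I (hA.1 v)
  have h1 := hW.1 u v huv.le βu β hIu hIv
  have h2 := hW.1 v z hvz.le β βz hIv hIz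
  by_cases c1 : (A.I u βu ∧ A.I v βu) ∧ (A.I u β ∧ A.I v β)
  · exact ⟨βu, c1.1.2, hsu⟩
  by_cases c2 : (A.I v β ∧ A.I z β) ∧ (A.I v βz ∧ A.I z βz)
  · exact ⟨βz, c2.2.1, hsz⟩
  have hxy : List.Lex (· < ·) βu.reverse β.reverse := h1 c1
  have hyz : List.Lex (· < ·) β.reverse βz.reverse := h2 c2
  refine ⟨β, hIv, List.reverse_prefix.mp ?_⟩
  exact prefix_of_lex_between α.reverse βu.reverse β.reverse βz.reverse
    (List.reverse_prefix.mpr hsu) (List.reverse_prefix.mpr hsz) hxy hyz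
end

section
/- Let A = (Q, E, s, F) be a Wheeler GNFA, let ≤ be a Wheeler order on A, and let α ∈ Σ*. If u, v ∈ Q are such that u < v and v ∈ G^≺(α), then u ∈ G^≺(α). In other words, G^≺(α) = Q[1, |G^≺(α)|]. -/
lemma colexLt_trans {σ : Type*} [LinearOrder σ] {a b c : List σ}
    (h1 : ColexLt a b) (h2 : ColexLt b c) : ColexLt a c := by
  unfold ColexLt at *
  exact List.lt_trans (α := σ) h1 h2

lemma I_nonempty {σ Q : Type*} (A : GNFA σ Q) (hA : A.Standard) (v : Q) :
    ∃ β, A.I v β := by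
  have h := hA.1 v
  induction h with
  | refl => exact ⟨[], GNFA.I.base⟩
  | tail _ hedge ih =>
    obtain ⟨β, hβ⟩ := ih
    obtain ⟨ρ, hρ⟩ := hedge
    exact ⟨β ++ ρ, GNFA.I.step hβ hρ⟩

lemma downward_closed_eq_Qiv {Q : Type*} [Fintype Q] [LinearOrder Q]
    (S : Set Q) (hS : ∀ u v : Q, u < v → v ∈ S → u ∈ S) :
    S = Qiv Q 1 S.ncard := by
  ext u
  simp only [Qiv, Set.mem_setOf_eq]
  have hrank : rankQ u = {v : Q | v ≤ u}.ncard := rfl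
  have h1 : 1 ≤ rankQ u := by
    rw [hrank]
    have : ({u} : Set Q).ncard ≤ {v : Q | v ≤ u}.ncard := by
      apply Set.ncard_le_ncard
      · intro x hx; simp at hx; simp [hx]
      · exact Set.toFinite _
    simpa using this
  constructor
  · intro hu
    refine ⟨h1, ?_⟩
    rw [hrank]
    apply Set.ncard_le_ncard
    · intro x hx
      rcases lt_or_eq_of_le (hx : x ≤ u) with h | h
      · exact hS x u h hu
      · rwa [h]
    · exact Set.toFinite _
  · rintro ⟨-, h2⟩
    by_contra hu
    have hsub : S ⊆ {v : Q | v < u} := by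
      intro w hw
      rcases lt_trichotomy w u with h | h | h
      · exact h
      · exact absurd (h ▸ hw) hu
      · exact absurd (hS u w h hw) hu
    have hlt : {v : Q | v < u}.ncard < {v : Q | v ≤ u}.ncard := by
      apply Set.ncard_lt_ncard
      · constructor
        · intro x hx; exact le_of_lt hx
        · intro hsub'
          have := hsub' (le_refl u)
          simp at this
      · exact Set.toFinite _
    have := Set.ncard_le_ncard hsub (Set.toFinite _)
    omega

/-- Let `A` be a Wheeler GNFA with Wheeler order `≤` and
`α ∈ Σ*`. If `u < v` and `v ∈ G^≺(α)`, then `u ∈ G^≺(α)`; in other words,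
`G^≺(α) = Q[1, |G^≺(α)|]`. -/
theorem gprec_downward_closed {σ Q : Type*} [Fintype σ] [LinearOrder σ]
    [Fintype Q] [LinearOrder Q] (A : GNFA σ Q)
    (hA : A.Standard) (hW : A.IsWheeler) (α : List σ) :
    (∀ u v : Q, u < v → v ∈ A.Gprec α → u ∈ A.Gprec α) ∧
    A.Gprec α = Qiv Q 1 (A.Gprec α).ncard := by
  have key : ∀ u v : Q, u < v → v ∈ A.Gprec α → u ∈ A.Gprec α := by
    intro u v huv hv β hβ
    obtain ⟨γ, hγ⟩ := I_nonempty A hA v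
    by_cases hvβ : A.I v β
    · exact hv β hvβ
    · have hpre := hW.1 u v (le_of_lt huv)
      have := hpre β γ hβ hγ (by tauto)
      exact colexLt_trans this (hv γ hγ)
  exact ⟨key, downward_closed_eq_Qiv _ key⟩
end

section
/- Let A = (Q, E, s, F) be a Wheeler GNFA, let ≤ be a Wheeler order on A, and let α ∈ Σ*. If u, v ∈ Q are such that u < v and v ∈ G^≺_⊣(α), then u ∈ G^≺_⊣(α). In other words, G^≺_⊣(α) = Q[1, |G^≺_⊣(α)|]. -/
/- **Statement 3.** Let `A` be a Wheeler GNFA with Wheeler order `≤` and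
`α ∈ Σ*`. If `u < v` and `v ∈ G^≺_⊣(α)`, then `u ∈ G^≺_⊣(α)`; in other words,
`G^≺_⊣(α) = Q[1, |G^≺_⊣(α)|]`. -/

/-- Key lexicographic fact: if `a` is a prefix of `d` and `a ≤ g ≤ d`
lexicographically, then `a` is a prefix of `g`. -/
private lemma lex_between_prefix {σ : Type*} [LinearOrder σ] :
    ∀ (a g d : List σ), a <+: d → ¬ List.Lex (· < ·) g a →
      ¬ List.Lex (· < ·) d g → a <+: g := by
  intro a
  induction a with
  | nil => intro g d _ _ _; exact List.nil_prefix
  | cons x a' ih =>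
    intro g d hpre hga hdg
    obtain ⟨d', rfl, hpre'⟩ : ∃ d', d = x :: d' ∧ a' <+: d' := by
      rcases hpre with ⟨t, ht⟩
      cases d with
      | nil => simp at ht
      | cons y d' =>
        rw [List.cons_append] at ht
        exact ⟨d', by injection ht with h1 h2; exact ⟨by rw [h1], ⟨t, h2⟩⟩⟩
    cases g with
    | nil => exact absurd List.Lex.nil hga
    | cons y g' =>
      rcases lt_trichotomy x y with hxy | hxy | hxy
      · exact absurd (List.Lex.rel hxy) hdg
      · subst hxy
        have h1 : ¬ List.Lex (· < ·) g' a' := fun h => hga (List.Lex.cons h)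
        have h2 : ¬ List.Lex (· < ·) d' g' := fun h => hdg (List.Lex.cons h)
        obtain ⟨t, ht⟩ := ih g' d' hpre' h1 h2
        exact ⟨t, by rw [List.cons_append, ht]⟩
      · exact absurd (List.Lex.rel hxy) hga

/-- In a standard GNFA, every state has a nonempty `I`-set. -/
private lemma GNFA.exists_I {σ Q : Type*} (A : GNFA σ Q) (hA : A.Standard)
    (u : Q) : ∃ β, A.I u β := by
  have h := hA.1 u
  induction h with
  | refl => exact ⟨[], GNFA.I.base⟩
  | tail _ he ih =>
    obtain ⟨β, hβ⟩ := ih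
    obtain ⟨ρ, hρ⟩ := he
    exact ⟨β ++ ρ, hβ.step hρ⟩

/-- main -/
theorem gprecsuf_downward_closed {σ Q : Type*} [Fintype σ] [LinearOrder σ]
    [Fintype Q] [LinearOrder Q] (A : GNFA σ Q)
    (hA : A.Standard) (hW : A.IsWheeler) (α : List σ) :
    (∀ u v : Q, u < v → v ∈ A.GprecSuf α → u ∈ A.GprecSuf α) ∧
    A.GprecSuf α = Qiv Q 1 (A.GprecSuf α).ncard := by
  classical
  set S := A.GprecSuf α with hS
  have h1 : ∀ u v : Q, u < v → v ∈ S → u ∈ S := by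
    intro u v huv hv
    by_cases hu : ∀ β, A.I u β → ColexLt β α
    · exact Or.inl hu
    · push_neg at hu
      obtain ⟨β, hβ, hβ'⟩ := hu
      rcases hv with hv | hv
      · -- v ∈ Gprec α : contradiction
        exfalso
        obtain ⟨γ, hγ⟩ := A.exists_I hA v
        have hγα : ColexLt γ α := hv γ hγ
        have hvβ : ¬ A.I v β := fun h => hβ' (hv β h)
        have hlt : ColexLt β γ :=
          hW.1 u v huv.le β γ hβ hγ (fun h => hvβ h.1.2)
        unfold ColexLt at hlt hγα hβ'
        exact hβ' (List.lt_trans (show β.reverse < γ.reverse from hlt) hγα)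
      · -- v ∈ Gsuf α
        obtain ⟨δ, hδ, hsuf⟩ := hv
        by_cases huδ : A.I u δ
        · exact Or.inr ⟨δ, huδ, hsuf⟩
        · have hlt : ColexLt β δ :=
            hW.1 u v huv.le β δ hβ hδ (fun h => huδ h.2.1)
          have hpre : α.reverse <+: δ.reverse := List.reverse_prefix.mpr hsuf
          have h2 : ¬ List.Lex (· < ·) δ.reverse β.reverse :=
            asymm (show List.Lex (· < ·) β.reverse δ.reverse from hlt)
          have hres := lex_between_prefix α.reverse β.reverse δ.reverse hpre hβ' h2
          exact Or.inr ⟨β, hβ, List.reverse_prefix.mp hres⟩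
  refine ⟨h1, ?_⟩
  have hdc : ∀ v ∈ S, ∀ u : Q, u ≤ v → u ∈ S := by
    intro v hv u hle
    rcases eq_or_lt_of_le hle with rfl | hlt
    · exact hv
    · exact h1 u v hlt hv
  ext u
  simp only [Qiv, Set.mem_setOf_eq]
  have hrank1 : 1 ≤ rankQ u := by
    rw [rankQ]
    exact (Set.ncard_pos (Set.toFinite _)).mpr ⟨u, le_refl u⟩
  constructor
  · intro hu
    refine ⟨hrank1, ?_⟩
    exact Set.ncard_le_ncard (fun v hv => hdc u hu v hv) (Set.toFinite S)
  · rintro ⟨-, h2⟩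
    by_contra hu
    have hsub : S ⊆ {v : Q | v < u} := by
      intro w hw
      rcases lt_or_ge w u with h | h
      · exact h
      · exact absurd (hdc w hw u h) hu
    have hss : {v : Q | v < u} ⊂ {v : Q | v ≤ u} := by
      constructor
      · intro v hv; exact le_of_lt hv
      · intro hc
        exact absurd (hc (le_refl u : u ∈ {v : Q | v ≤ u})) (lt_irrefl u)
    have := Set.ncard_lt_ncard hss (Set.toFinite _)
    have h3 : S.ncard ≤ {v : Q | v < u}.ncard :=
      Set.ncard_le_ncard hsub (Set.toFinite _)
    rw [rankQ] at h2
    omega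
end

section
/- Let A = (Q, E, s, F) be a Wheeler r-GNFA, let ≤ be a Wheeler order on A, and let α ∈ Σ* with α ≠ ε. Let i* be the largest integer 0 ≤ i ≤ |Q| such that, if i ≥ 1, then Q[i] ∈ G*(α). If i* ≥ 1, then Q[i*] ∈ G_⊣(α). -/
private lemma rankQ_strictMono {Q : Type*} [Fintype Q] [LinearOrder Q] :
    StrictMono (rankQ (Q := Q)) := by
  intro u v huv
  unfold rankQ
  apply Set.ncard_lt_ncard
  · constructor
    · intro x hx; exact le_trans hx huv.le
    · intro h
      have : v ∈ {x : Q | x ≤ u} := h (le_refl v)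
      exact absurd this (by simpa using huv)
  · exact Set.toFinite _

private lemma reach_exists_I {σ Q : Type*} (A : GNFA σ Q) {u : Q}
    (h : A.Reach A.s u) : ∃ γ, A.I u γ := by
  induction h with
  | refl => exact ⟨[], GNFA.I.base⟩
  | tail _ hstep ih =>
      obtain ⟨γ, hγ⟩ := ih
      obtain ⟨ρ, hρ⟩ := hstep
      exact ⟨γ ++ ρ, GNFA.I.step hγ hρ⟩

/-- Let `A` be a Wheeler `r`-GNFA with Wheeler order `≤` and
`α ≠ ε`. Let `i*` be the largest `0 ≤ i ≤ |Q|` such that, if `i ≥ 1`, then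
`Q[i] ∈ G*(α)`. If `i* ≥ 1`, then `Q[i*] ∈ G_⊣(α)`. -/
theorem istar_mem_gsuf {σ Q : Type*} [Fintype σ] [LinearOrder σ]
    [Fintype Q] [LinearOrder Q] (A : GNFA σ Q)
    (hA : A.Standard) (hW : A.IsWheeler) (r : ℕ) (hr : A.Bounded r)
    (α : List σ) (hα : α ≠ [])
    (istar : ℕ) (hi_le : istar ≤ Fintype.card Q) (hi : A.Icond α istar)
    (hi_max : ∀ i ≤ Fintype.card Q, A.Icond α i → i ≤ istar)
    (h1 : 1 ≤ istar) :
    ∀ u : Q, rankQ u = istar → u ∈ A.Gsuf α := by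
  intro u hu
  obtain ⟨u₀, hu₀r, ρ, ⟨u', hE⟩, hsuf⟩ := hi h1
  have heq : u = u₀ := rankQ_strictMono.injective (hu.trans hu₀r.symm)
  subst heq
  obtain ⟨γ, hγ⟩ := reach_exists_I A (hA.1 u')
  exact ⟨γ ++ ρ, GNFA.I.step hγ hE, hsuf.trans (List.suffix_append γ ρ)⟩
end
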